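/- Let θ ∈ (0, 2/5]. Then for every δ ∈ (0, 1] and all ξ, ξ₁, ξ₂ ∈ ℝ with |ξ| ≤ δ^{−2/5+θ}, |ξ₁| ≤ δ^{−2/5+θ}, and |ξ₂| ≤ δ^{−2/5+θ}, one has |Ξ_KdV(ξ, ξ₁, ξ₂) − Ξ̃_δ(ξ, ξ₁, ξ₂)| ≤ 3δ^{5θ}, where Ξ_KdV(ξ, ξ₁, ξ₂) := ξ³ − ξ₁³ − ξ₂³. -/

import Mathlib

open Real

lemma hasSum_shift2 : HasSum (fun k : ℕ => 1 / (((k:ℝ)+1)^2 * π^2)) (1/6) := by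
  have h0 : HasSum (fun n : ℕ => (1:ℝ)/((n:ℝ)+1)^2) (π^2/6) := by
    have := (hasSum_nat_add_iff (f := fun n : ℕ => (1:ℝ)/(n:ℝ)^2) (g := π^2/6) 1).mpr ?_
    · convert this using 2 with n
      · rfl
      push_cast; ring_nf
    · simpa using hasSum_zeta_two
  have h1 := h0.div_const (π^2)
  have : (fun n : ℕ => ((1:ℝ)/((n:ℝ)+1)^2)/π^2) = fun n : ℕ => 1/(((n:ℝ)+1)^2 * π^2) := by
    funext n; rw [div_div, one_div]
  rw [this] at h1
  convert h1 using 1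
  · rfl
  field_simp

lemma hasSum_shift4 : HasSum (fun k : ℕ => 1 / ((((k:ℝ)+1)^2 * π^2)^2)) (1/90) := by
  have h0 : HasSum (fun n : ℕ => (1:ℝ)/((n:ℝ)+1)^4) (π^4/90) := by
    have := (hasSum_nat_add_iff (f := fun n : ℕ => (1:ℝ)/(n:ℝ)^4) (g := π^4/90) 1).mpr ?_
    · convert this using 2 with n
      · rfl
      push_cast; ring_nf
    · simpa using hasSum_zeta_four
  have h1 := h0.div_const (π^4)
  have : (fun n : ℕ => ((1:ℝ)/((n:ℝ)+1)^4)/π^4) = fun n : ℕ => 1/((((n:ℝ)+1)^2 * π^2)^2) := by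
    funext n; rw [div_div, one_div]; ring_nf
  rw [this] at h1
  convert h1 using 1
  have := Real.pi_ne_zero
  · rfl
  field_simp

/-- The Fourier multiplier of the scaled ILW dispersion operator:
`L_δ(ξ) = 6ξ² ∑_{k=1}^∞ 1/(k²π² + δ²ξ²)`. -/
noncomputable def Ldelta (δ ξ : ℝ) : ℝ :=
  6 * ξ ^ 2 * ∑' k : ℕ, 1 / (((k : ℝ) + 1) ^ 2 * Real.pi ^ 2 + δ ^ 2 * ξ ^ 2)

/-- The dispersion symbol `p̃_δ(ξ) = ξ·L_δ(ξ)` of the scaled ILW. -/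
noncomputable def ptilde (δ ξ : ℝ) : ℝ := ξ * Ldelta δ ξ

/-- The resonance function `Ξ̃_δ(ξ, ξ₁, ξ₂) = p̃_δ(ξ) − p̃_δ(ξ₁) − p̃_δ(ξ₂)`. -/
noncomputable def XiTilde (δ ξ ξ₁ ξ₂ : ℝ) : ℝ :=
  ptilde δ ξ - ptilde δ ξ₁ - ptilde δ ξ₂

/-- The KdV resonance function `Ξ_KdV(ξ, ξ₁, ξ₂) = ξ³ − ξ₁³ − ξ₂³`. -/
noncomputable def XiKdV (ξ ξ₁ ξ₂ : ℝ) : ℝ := ξ ^ 3 - ξ₁ ^ 3 - ξ₂ ^ 3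

lemma ptilde_close (δ ξ : ℝ) : |ξ^3 - ptilde δ ξ| ≤ δ^2 * |ξ|^5 := by
  set a : ℝ := δ^2 * ξ^2 with ha_def
  have ha : 0 ≤ a := by positivity
  set A : ℕ → ℝ := fun k => ((k:ℝ)+1)^2 * π^2 with hA_def
  have hA : ∀ k, 0 < A k := by
    intro k
    have h1 : (0:ℝ) < ((k:ℝ)+1)^2 := by positivity
    exact mul_pos h1 (by positivity)
  have hg : HasSum (fun k => 1 / A k) (1/6) := hasSum_shift2
  have hg2 : HasSum (fun k => 1 / (A k)^2) (1/90) := hasSum_shift4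
  have hle : ∀ k, 1 / (A k + a) ≤ 1 / A k := fun k =>
    one_div_le_one_div_of_le (hA k) (le_add_of_nonneg_right ha)
  have hfpos : ∀ k, 0 ≤ 1 / (A k + a) := fun k => by positivity
  have hf : Summable (fun k => 1 / (A k + a)) :=
    Summable.of_nonneg_of_le hfpos hle hg.summable
  have hdiff : ∀ k, 1 / A k - 1 / (A k + a) = a / (A k * (A k + a)) := by
    intro k
    have h1 := (hA k).ne'
    have h2 : A k + a ≠ 0 := by positivity
    field_simp
    ring
  have hdle : ∀ k, 1 / A k - 1 / (A k + a) ≤ a * (1 / (A k)^2) := by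
    intro k
    rw [hdiff k, mul_one_div]
    apply div_le_div_of_nonneg_left ha (by positivity)
    nlinarith [mul_nonneg (hA k).le ha]
  have hsub : HasSum (fun k => 1 / A k - 1 / (A k + a)) (1/6 - ∑' k, 1/(A k + a)) :=
    hg.sub hf.hasSum
  have hub : HasSum (fun k => a * (1 / (A k)^2)) (a * (1/90)) := hg2.mul_left a
  have hT : 1/6 - ∑' k, 1/(A k + a) ≤ a/90 := by
    have := Summable.tsum_le_tsum hdle hsub.summable hub.summable
    rw [hsub.tsum_eq, hub.tsum_eq] at this
    linarith
  have hT0 : 0 ≤ 1/6 - ∑' k, 1/(A k + a) := by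
    have := Summable.tsum_le_tsum hle hf hg.summable
    rw [hg.tsum_eq] at this
    linarith
  have key : ξ^3 - ptilde δ ξ = 6 * ξ^3 * (1/6 - ∑' k, 1/(A k + a)) := by
    simp only [ptilde, Ldelta, hA_def, ha_def]
    ring
  rw [key, abs_mul, abs_of_nonneg hT0]
  have habs : |6 * ξ^3| = 6 * |ξ|^3 := by
    rw [abs_mul, abs_pow]; norm_num
  rw [habs]
  have h5 : |ξ|^5 = |ξ|^3 * ξ^2 := by
    rw [← sq_abs]; ring
  rw [h5]
  have hx3 : (0:ℝ) ≤ |ξ|^3 := by positivity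
  calc 6 * |ξ|^3 * (1/6 - ∑' k, 1/(A k + a)) ≤ 6 * |ξ|^3 * (a/90) := by
        apply mul_le_mul_of_nonneg_left hT (by positivity)
    _ ≤ δ^2 * (|ξ|^3 * ξ^2) := by
        rw [ha_def]
        nlinarith [mul_nonneg hx3 (mul_nonneg (sq_nonneg δ) (sq_nonneg ξ))]

/-- On frequencies of size at most `δ^{−2/5+θ}`, the scaled ILW resonance
function is within `3δ^{5θ}` of the KdV resonance function. -/
theorem XiKdV_sub_XiTilde_bound (θ : ℝ) (hθ : θ ∈ Set.Ioc (0 : ℝ) (2 / 5))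
    (δ : ℝ) (hδ : δ ∈ Set.Ioc (0 : ℝ) 1) (ξ ξ₁ ξ₂ : ℝ)
    (h : |ξ| ≤ δ ^ (-(2 : ℝ) / 5 + θ)) (h₁ : |ξ₁| ≤ δ ^ (-(2 : ℝ) / 5 + θ))
    (h₂ : |ξ₂| ≤ δ ^ (-(2 : ℝ) / 5 + θ)) :
    |XiKdV ξ ξ₁ ξ₂ - XiTilde δ ξ ξ₁ ξ₂| ≤ 3 * δ ^ (5 * θ) := by
  obtain ⟨hd0, _⟩ := hδ
  have key : ∀ x : ℝ, |x| ≤ δ ^ (-(2 : ℝ) / 5 + θ) →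
      |x^3 - ptilde δ x| ≤ δ ^ (5 * θ) := by
    intro x hx
    refine (ptilde_close δ x).trans ?_
    have h1 : |x|^5 ≤ (δ ^ (-(2 : ℝ) / 5 + θ))^5 :=
      pow_le_pow_left₀ (abs_nonneg x) hx 5
    have h2 : δ^2 * |x|^5 ≤ δ^2 * (δ ^ (-(2 : ℝ) / 5 + θ))^5 := by
      apply mul_le_mul_of_nonneg_left h1 (by positivity)
    refine h2.trans_eq ?_
    rw [← Real.rpow_natCast (δ ^ (-(2 : ℝ) / 5 + θ)) 5, ← Real.rpow_mul hd0.le,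
      ← Real.rpow_natCast δ 2, ← Real.rpow_add hd0]
    norm_num
    ring_nf
  have e : XiKdV ξ ξ₁ ξ₂ - XiTilde δ ξ ξ₁ ξ₂ =
      (ξ^3 - ptilde δ ξ) - (ξ₁^3 - ptilde δ ξ₁) - (ξ₂^3 - ptilde δ ξ₂) := by
    simp only [XiKdV, XiTilde]; ring
  rw [e]
  have b := key ξ h
  have b₁ := key ξ₁ h₁
  have b₂ := key ξ₂ h₂
  calc |(ξ^3 - ptilde δ ξ) - (ξ₁^3 - ptilde δ ξ₁) - (ξ₂^3 - ptilde δ ξ₂)|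
      ≤ |(ξ^3 - ptilde δ ξ) - (ξ₁^3 - ptilde δ ξ₁)| + |ξ₂^3 - ptilde δ ξ₂| :=
        abs_sub _ _
    _ ≤ |ξ^3 - ptilde δ ξ| + |ξ₁^3 - ptilde δ ξ₁| + |ξ₂^3 - ptilde δ ξ₂| := by
        have := abs_sub (ξ^3 - ptilde δ ξ) (ξ₁^3 - ptilde δ ξ₁)
        linarith
    _ ≤ 3 * δ ^ (5 * θ) := by linarith
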